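/- For every x with 0 < x ≤ A0, letting R_x = √((ω²/2)·ln(A0/x)), the tail probability of the Rician pointing-error radius equals the integral of the channel-gain density: ∫_{R_x}^∞ f_r(r) dr = ∫_0^x f_h(t) dt. (Equivalently, under the gain map r ↦ A0·exp(−2r²/ω²), the Rician radial pointing error induces the channel gain density f_h on (0, A0].) -/

import Mathlib

open Real MeasureTheory

/-- Under the Gaussian-beam gain map `r ↦ A0 exp(−2r²/ω²)`, the Rician radial
pointing error induces the channel-gain density `f_h` on `(0, A0]`: for every
`0 < x ≤ A0`, with `R_x = √((ω²/2) ln(A0/x))`,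
`∫_{R_x}^∞ f_r = ∫_0^x f_h`. -/
theorem rician_tail_eq_gain_cdf
    (A0 ω ℓ σ s : ℝ) (hA0 : 0 < A0) (hω : 0 < ω) (hℓ : 0 < ℓ) (hσ : 0 < σ)
    (hs : 0 ≤ s)
    (γ ν : ℝ) (hγ : γ = ω / (2 * ℓ * σ)) (hν : ν = s ^ 2 / (2 * ℓ ^ 2 * σ ^ 2))
    (I0 fr fh : ℝ → ℝ)
    (hI0 : ∀ p, I0 p = ∑' n : ℕ, (p / 2) ^ (2 * n) / ((n.factorial : ℝ)) ^ 2)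
    (hfr : ∀ r, 0 ≤ r → fr r =
      (r / (ℓ ^ 2 * σ ^ 2)) * Real.exp (-((r ^ 2 + s ^ 2) / (2 * ℓ ^ 2 * σ ^ 2)))
        * I0 (r * s / (ℓ ^ 2 * σ ^ 2)))
    (hfh : ∀ t, 0 < t → t ≤ A0 → fh t =
      (γ ^ 2 / A0 ^ (γ ^ 2)) * Real.exp (-ν) * t ^ (γ ^ 2 - 1)
        * I0 ((s / (ℓ ^ 2 * σ ^ 2)) * Real.sqrt ((ω ^ 2 / 2) * Real.log (A0 / t)))) :
    ∀ x, 0 < x → x ≤ A0 →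
      (∫ r in Set.Ioi (Real.sqrt ((ω ^ 2 / 2) * Real.log (A0 / x))), fr r)
        = ∫ t in (0 : ℝ)..x, fh t := by
  intro x hx hxA
  have hω2 : (0:ℝ) < ω ^ 2 := by positivity
  set R := Real.sqrt ((ω ^ 2 / 2) * Real.log (A0 / x)) with hRdef
  have hlog0 : 0 ≤ Real.log (A0 / x) := Real.log_nonneg (by rw [le_div_iff₀ hx]; linarith)
  have hR0 : 0 ≤ R := Real.sqrt_nonneg _
  have hRsq : R ^ 2 = (ω ^ 2 / 2) * Real.log (A0 / x) :=
    Real.sq_sqrt (mul_nonneg (by positivity) hlog0)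
  set f : ℝ → ℝ := fun r => A0 * Real.exp (-(2 * r ^ 2 / ω ^ 2)) with hfdef
  set f' : ℝ → ℝ :=
    fun r => A0 * (Real.exp (-(2 * r ^ 2 / ω ^ 2)) * (-(2 * (2 * r) / ω ^ 2))) with hf'def
  have hderiv : ∀ r : ℝ, HasDerivAt f (f' r) r := by
    intro r
    have h1 : HasDerivAt (fun r : ℝ => -(2 * r ^ 2 / ω ^ 2)) (-(2 * (2 * r) / ω ^ 2)) r := by
      have h0 := ((hasDerivAt_pow 2 r).const_mul (2:ℝ)).div_const (ω ^ 2)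
      exact (h0.neg).congr_deriv (by simp)
    exact h1.exp.const_mul A0
  -- basic facts about f
  have hfpos : ∀ r : ℝ, 0 < f r := fun r => by positivity
  have hfle : ∀ r : ℝ, f r ≤ A0 := by
    intro r
    have : Real.exp (-(2 * r ^ 2 / ω ^ 2)) ≤ 1 := Real.exp_le_one_iff.mpr (neg_nonpos.mpr (by positivity))
    calc f r = A0 * Real.exp (-(2 * r ^ 2 / ω ^ 2)) := rfl
      _ ≤ A0 * 1 := by nlinarith
      _ = A0 := mul_one A0
  have hfinv : ∀ t : ℝ, 0 < t → t ≤ A0 →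
      f (Real.sqrt ((ω ^ 2 / 2) * Real.log (A0 / t))) = t := by
    intro t ht htA
    have hlt : 0 ≤ Real.log (A0 / t) := Real.log_nonneg (by rw [le_div_iff₀ ht]; linarith)
    have hsq : Real.sqrt ((ω ^ 2 / 2) * Real.log (A0 / t)) ^ 2
        = (ω ^ 2 / 2) * Real.log (A0 / t) := Real.sq_sqrt (mul_nonneg (by positivity) hlt)
    show A0 * Real.exp (-(2 * Real.sqrt ((ω ^ 2 / 2) * Real.log (A0 / t)) ^ 2 / ω ^ 2)) = t
    rw [hsq]
    have : -(2 * ((ω ^ 2 / 2) * Real.log (A0 / t)) / ω ^ 2) = -Real.log (A0 / t) := by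
      field_simp
    rw [this, Real.exp_neg, Real.exp_log (by positivity)]
    field_simp
  have hfR : f R = x := hfinv x hx hxA
  have hmono : ∀ a b : ℝ, 0 ≤ a → a < b → f b < f a := by
    intro a b ha hab
    have h2 : -(2 * b ^ 2 / ω ^ 2) < -(2 * a ^ 2 / ω ^ 2) := by
      have : a ^ 2 < b ^ 2 := by nlinarith
      have := div_lt_div_of_pos_right (by nlinarith : 2 * a ^ 2 < 2 * b ^ 2) hω2
      linarith
    have := Real.exp_lt_exp.mpr h2
    show A0 * _ < A0 * _
    exact mul_lt_mul_of_pos_left this hA0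
  have hinj : Set.InjOn f (Set.Ioi R) := by
    intro a ha b hb hab
    rcases lt_trichotomy a b with h | h | h
    · exact absurd hab (hmono a b (hR0.trans (le_of_lt ha)) h).ne'
    · exact h
    · exact absurd hab (hmono b a (hR0.trans (le_of_lt hb)) h).ne
  have himg : f '' Set.Ioi R = Set.Ioo 0 x := by
    ext t
    constructor
    · rintro ⟨r, hr, rfl⟩
      have hr' : R < r := hr
      exact ⟨hfpos r, hfR ▸ hmono R r hR0 hr'⟩
    · rintro ⟨ht0, htx⟩
      have htA : t ≤ A0 := le_trans (le_of_lt htx) hxA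
      refine ⟨Real.sqrt ((ω ^ 2 / 2) * Real.log (A0 / t)), ?_, hfinv t ht0 htA⟩
      have hlt : A0 / x < A0 / t := div_lt_div_of_pos_left hA0 ht0 htx
      have hloglt : Real.log (A0 / x) < Real.log (A0 / t) :=
        Real.log_lt_log (by positivity) hlt
      exact Real.sqrt_lt_sqrt (mul_nonneg (by positivity) hlog0)
        (by nlinarith)
  -- pointwise identity on Ioi R
  have hkey : Set.EqOn fr (fun r => |f' r| • fh (f r)) (Set.Ioi R) := by
    intro r hr
    have hr0 : 0 < r := lt_of_le_of_lt hR0 hr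
    have ht0 : 0 < f r := hfpos r
    have htA : f r ≤ A0 := hfle r
    have hback : Real.sqrt ((ω ^ 2 / 2) * Real.log (A0 / f r)) = r := by
      have h1 : A0 / f r = Real.exp (2 * r ^ 2 / ω ^ 2) := by
        show A0 / (A0 * Real.exp (-(2 * r ^ 2 / ω ^ 2))) = _
        rw [Real.exp_neg]
        field_simp
      rw [h1, Real.log_exp]
      have : ω ^ 2 / 2 * (2 * r ^ 2 / ω ^ 2) = r ^ 2 := by field_simp
      rw [this, Real.sqrt_sq hr0.le]
    have habs : |f' r| = A0 * Real.exp (-(2 * r ^ 2 / ω ^ 2)) * (2 * (2 * r) / ω ^ 2) := by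
      have h1 : f' r = -(A0 * Real.exp (-(2 * r ^ 2 / ω ^ 2)) * (2 * (2 * r) / ω ^ 2)) := by
        show A0 * (Real.exp (-(2 * r ^ 2 / ω ^ 2)) * (-(2 * (2 * r) / ω ^ 2))) = _
        ring
      rw [h1, abs_neg, abs_of_nonneg (by positivity)]
    have htpow : (f r) ^ (γ ^ 2 - 1) = (f r) ^ (γ ^ 2) / (f r) := by
      rw [Real.rpow_sub ht0, Real.rpow_one]
    have hta : (f r) ^ (γ ^ 2) / A0 ^ (γ ^ 2)
        = Real.exp (-(2 * r ^ 2 / ω ^ 2) * γ ^ 2) := by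
      rw [← Real.div_rpow ht0.le hA0.le]
      have h2 : f r / A0 = Real.exp (-(2 * r ^ 2 / ω ^ 2)) := by
        show A0 * Real.exp (-(2 * r ^ 2 / ω ^ 2)) / A0 = _
        field_simp
      rw [h2, ← Real.exp_mul]
    show fr r = |f' r| • fh (f r)
    rw [hfr r hr0.le, hfh (f r) ht0 htA, hback, smul_eq_mul]
    have harg : s / (ℓ ^ 2 * σ ^ 2) * r = r * s / (ℓ ^ 2 * σ ^ 2) := by ring
    rw [harg]
    have hA0g : (0:ℝ) < A0 ^ (γ ^ 2) := Real.rpow_pos_of_pos hA0 _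
    have hcoef : r / (ℓ ^ 2 * σ ^ 2) * Real.exp (-((r ^ 2 + s ^ 2) / (2 * ℓ ^ 2 * σ ^ 2)))
        = |f' r| * (γ ^ 2 / A0 ^ (γ ^ 2) * Real.exp (-ν) * (f r) ^ (γ ^ 2 - 1)) := by
      rw [habs, htpow]
      have hexp : Real.exp (-ν) * Real.exp (-(2 * r ^ 2 / ω ^ 2) * γ ^ 2)
          = Real.exp (-((r ^ 2 + s ^ 2) / (2 * ℓ ^ 2 * σ ^ 2))) := by
        rw [← Real.exp_add]
        congr 1
        subst hγ hν
        field_simp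
        ring
      have hcoef2 : (2 * (2 * r) / ω ^ 2) * γ ^ 2 = r / (ℓ ^ 2 * σ ^ 2) := by
        subst hγ
        field_simp
      have h3 : f r = A0 * Real.exp (-(2 * r ^ 2 / ω ^ 2)) := rfl
      have h4 : A0 * Real.exp (-(2 * r ^ 2 / ω ^ 2)) * ((f r) ^ (γ ^ 2) / (f r))
          = (f r) ^ (γ ^ 2) := by
        rw [← h3]
        field_simp
      have hrw : A0 * Real.exp (-(2 * r ^ 2 / ω ^ 2)) * (2 * (2 * r) / ω ^ 2) *
          (γ ^ 2 / A0 ^ (γ ^ 2) * Real.exp (-ν) * ((f r) ^ (γ ^ 2) / (f r)))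
          = (2 * (2 * r) / ω ^ 2) * γ ^ 2 *
            (Real.exp (-ν) * ((f r) ^ (γ ^ 2) / A0 ^ (γ ^ 2))) := by
        linear_combination (2 * (2 * r) / ω ^ 2 * (γ ^ 2 / A0 ^ (γ ^ 2)) * Real.exp (-ν)) * h4
      rw [hrw, hta, hcoef2, hexp]
    linear_combination (I0 (r * s / (ℓ ^ 2 * σ ^ 2))) * hcoef
  calc (∫ r in Set.Ioi R, fr r)
      = ∫ r in Set.Ioi R, |f' r| • fh (f r) :=
        setIntegral_congr_fun measurableSet_Ioi hkey
    _ = ∫ t in f '' Set.Ioi R, fh t :=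
        (integral_image_eq_integral_abs_deriv_smul measurableSet_Ioi
          (fun r _ => (hderiv r).hasDerivWithinAt) hinj fh).symm
    _ = ∫ t in Set.Ioo 0 x, fh t := by rw [himg]
    _ = ∫ t in (0:ℝ)..x, fh t := by
        rw [intervalIntegral.integral_of_le hx.le, integral_Ioc_eq_integral_Ioo]
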